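/- Suppose n vertices are independently assigned one of k community labels, where label i is chosen with probability rᵢ, Σᵢ rᵢ = 1, and each rᵢ = Θ(1/k). If k = o(n^{1/5}), then with probability tending to 1 as n → ∞: (i) every community size nᵢ satisfies nᵢ = Θ(n/k), and (ii) all k community sizes n₁,...,n_k are pairwise distinct. -/

import Mathlib

open Finset Filter

section AuxLemmas
open scoped Classical

-- central binomial bound
lemma cb_sq (t : ℕ) : (Nat.centralBinom t)^2 * (3*t+1) ≤ 16^t := by
  induction t with
  | zero => simp [Nat.centralBinom]
  | succ t ih =>
    have key := Nat.succ_mul_centralBinom_succ t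
    have h1 : ((t+1) * Nat.centralBinom (t+1))^2 * (3*(t+1)+1)
        = (t+1)^2 * (Nat.centralBinom (t+1)^2 * (3*(t+1)+1)) := by ring
    have h2 : ((t+1) * Nat.centralBinom (t+1))^2 * (3*(t+1)+1)
        = (2*(2*t+1))^2 * (3*t+4) * Nat.centralBinom t ^2 := by rw [key]; ring
    have hpoly : (2*(2*t+1))^2 * (3*t+4) ≤ 16 * (t+1)^2 * (3*t+1) := by nlinarith
    have h3 : (2*(2*t+1))^2 * (3*t+4) * Nat.centralBinom t ^2
        ≤ 16 * (t+1)^2 * (Nat.centralBinom t^2 * (3*t+1)) := by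
      calc (2*(2*t+1))^2 * (3*t+4) * Nat.centralBinom t ^2
          ≤ 16 * (t+1)^2 * (3*t+1) * Nat.centralBinom t ^2 := Nat.mul_le_mul_right _ hpoly
        _ = 16 * (t+1)^2 * (Nat.centralBinom t^2 * (3*t+1)) := by ring
    have h4 : (t+1)^2 * (Nat.centralBinom (t+1)^2 * (3*(t+1)+1)) ≤ (t+1)^2 * (16^(t+1)) := by
      rw [← h1, h2]
      calc (2*(2*t+1))^2 * (3*t+4) * Nat.centralBinom t ^2
          ≤ 16 * (t+1)^2 * (Nat.centralBinom t^2 * (3*t+1)) := h3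
        _ ≤ 16 * (t+1)^2 * 16^t := by exact Nat.mul_le_mul_left _ ih
        _ = (t+1)^2 * 16^(t+1) := by ring
    exact Nat.le_of_mul_le_mul_left h4 (by positivity)


lemma cb_div (t : ℕ) : (Nat.centralBinom t : ℝ) / 4^t ≤ (Real.sqrt (3*t+1))⁻¹ := by
  have h0 : (0:ℝ) < 3*(t:ℝ)+1 := by positivity
  have h : ((Nat.centralBinom t : ℝ))^2 * (3*t+1) ≤ 16^t := by
    have := cb_sq t
    calc ((Nat.centralBinom t : ℝ))^2 * (3*t+1) = ((Nat.centralBinom t ^2 * (3*t+1) : ℕ) : ℝ) := by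
          push_cast; ring
      _ ≤ ((16^t : ℕ) : ℝ) := by exact_mod_cast this
      _ = 16^t := by push_cast; ring
  have hsq : ((Nat.centralBinom t : ℝ) / 4^t)^2 ≤ ((Real.sqrt (3*t+1))⁻¹)^2 := by
    rw [inv_pow, Real.sq_sqrt h0.le, div_pow, div_le_iff₀ (by positivity),
      inv_mul_eq_div, le_div_iff₀ h0]
    calc ((Nat.centralBinom t : ℝ))^2 * (3*t+1) ≤ 16^t := h
      _ = (4^t)^2 := by rw [← pow_mul, pow_mul']; norm_num
  calc (Nat.centralBinom t : ℝ) / 4^t = Real.sqrt (((Nat.centralBinom t : ℝ) / 4^t)^2) := by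
        rw [Real.sqrt_sq (by positivity)]
    _ ≤ Real.sqrt (((Real.sqrt (3*t+1))⁻¹)^2) := Real.sqrt_le_sqrt hsq
    _ = (Real.sqrt (3*t+1))⁻¹ := by rw [Real.sqrt_sq (by positivity)]

section Swap

variable {n K : ℕ} (r : Fin K → ℝ)

lemma swap_lemma (φ : Fin n → Fin K → ℝ) :
    ∑ f : Fin n → Fin K, ∏ v, φ v (f v) = ∏ v, ∑ a, φ v a :=
  (Fintype.prod_sum φ).symm

lemma total_mass (hsum : ∑ i, r i = 1) :
    ∑ f : Fin n → Fin K, ∏ v, r (f v) = 1 := by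
  rw [swap_lemma (fun _ a => r a)]; simp [hsum]

lemma indicator_prod (hsum : ∑ j, r j = 1) (s : Finset (Fin n)) (i : Fin K) :
    ∑ f : Fin n → Fin K, (if ∀ v ∈ s, f v = i then ∏ v, r (f v) else 0) = r i ^ s.card := by
  have key : ∀ f : Fin n → Fin K,
      (if ∀ v ∈ s, f v = i then ∏ v, r (f v) else 0)
      = ∏ v, (if v ∈ s then (if f v = i then r (f v) else 0) else r (f v)) := by
    intro f
    by_cases h : ∀ v ∈ s, f v = i
    · rw [if_pos h]
      refine Finset.prod_congr rfl fun v _ => ?_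
      by_cases hv : v ∈ s
      · simp [hv, h v hv]
      · simp [hv]
    · rw [if_neg h]
      push_neg at h
      obtain ⟨v, hv, hne⟩ := h
      exact (Finset.prod_eq_zero (mem_univ v) (by simp [hv, hne])).symm
  simp_rw [key]
  rw [swap_lemma (fun v a => if v ∈ s then (if a = i then r a else 0) else r a)]
  have : ∀ v : Fin n, (∑ a, (if v ∈ s then (if a = i then r a else 0) else r a))
      = (if v ∈ s then r i else 1) := by
    intro v
    by_cases hv : v ∈ s <;> simp [hv, hsum]
  simp_rw [this]
  rw [Finset.prod_ite_mem, univ_inter, prod_const]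

lemma Esingle (hsum : ∑ j, r j = 1) (i : Fin K) (u : Fin n) :
    ∑ f : Fin n → Fin K, (∏ v, r (f v)) * (if f u = i then (1:ℝ) else 0) = r i := by
  have := indicator_prod r hsum {u} i
  simp only [Finset.mem_singleton, forall_eq, Finset.card_singleton, pow_one] at this
  rw [← this]
  refine Fintype.sum_congr _ _ fun f => ?_
  by_cases h : f u = i <;> simp [h]

lemma Epair (hsum : ∑ j, r j = 1) (i : Fin K) (u w : Fin n) :
    ∑ f : Fin n → Fin K, (∏ v, r (f v)) * ((if f u = i then (1:ℝ) else 0) * (if f w = i then (1:ℝ) else 0))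
    = if u = w then r i else r i ^ 2 := by
  by_cases huw : u = w
  · subst huw
    rw [if_pos rfl, ← Esingle r hsum i u]
    refine Fintype.sum_congr _ _ fun f => ?_
    by_cases h : f u = i <;> simp [h]
  · rw [if_neg huw]
    have := indicator_prod r hsum {u, w} i
    have hcard : ({u, w} : Finset (Fin n)).card = 2 := by
      rw [Finset.card_insert_of_notMem (by simpa using huw), Finset.card_singleton]
    rw [hcard] at this
    rw [← this]
    refine Fintype.sum_congr _ _ fun f => ?_
    by_cases h1 : f u = i <;> by_cases h2 : f w = i <;>
      simp [h1, h2]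

/-- The count as a real-valued sum of indicators. -/
lemma cnt_eq_sum (i : Fin K) (f : Fin n → Fin K) :
    (((univ.filter fun v => f v = i).card : ℕ) : ℝ) = ∑ u, (if f u = i then (1:ℝ) else 0) := by
  rw [Finset.card_filter]
  push_cast
  refine Finset.sum_congr rfl fun u _ => ?_
  by_cases h : f u = i <;> simp [h]

lemma cheb_core (hsum : ∑ j, r j = 1) (i : Fin K) :
    ∑ f : Fin n → Fin K, (∏ v, r (f v)) *
      ((((univ.filter fun v => f v = i).card : ℕ) : ℝ) - n * r i)^2
    = n * r i * (1 - r i) := by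
  set w : (Fin n → Fin K) → ℝ := fun f => ∏ v, r (f v) with hw
  set χ : Fin n → (Fin n → Fin K) → ℝ := fun u f => if f u = i then (1:ℝ) else 0 with hχ
  have hS1 : ∑ f : Fin n → Fin K, w f * (∑ u, χ u f) = n * r i := by
    simp_rw [Finset.mul_sum]
    rw [Finset.sum_comm]
    simp_rw [hw, hχ, Esingle r hsum i]
    rw [Finset.sum_const, Finset.card_univ, Fintype.card_fin, nsmul_eq_mul]
  have hS2 : ∑ f : Fin n → Fin K, w f * (∑ u, χ u f)^2
      = n * r i + ((n:ℝ)^2 - n) * r i ^ 2 := by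
    have expand : ∀ f, w f * (∑ u, χ u f)^2 = ∑ u, ∑ u', w f * (χ u f * χ u' f) := by
      intro f
      rw [sq, Finset.sum_mul_sum]
      rw [Finset.mul_sum]
      refine Finset.sum_congr rfl fun u _ => ?_
      rw [Finset.mul_sum]
    simp_rw [expand]
    rw [Finset.sum_comm]
    have : ∀ u : Fin n, ∑ f : Fin n → Fin K, ∑ u', w f * (χ u f * χ u' f)
        = ∑ u', if u = u' then r i else r i ^ 2 := by
      intro u
      rw [Finset.sum_comm]
      exact Finset.sum_congr rfl fun u' _ => Epair r hsum i u u'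
    simp_rw [this]
    have inner : ∀ u : Fin n, ∑ u' : Fin n, (if u = u' then r i else r i ^ 2)
        = r i + ((n:ℝ) - 1) * r i ^ 2 := by
      intro u
      have : ∀ u' : Fin n, (if u = u' then r i else r i ^ 2)
          = r i ^ 2 + (if u = u' then r i - r i ^2 else 0) := by
        intro u'; by_cases h : u = u' <;> simp [h]
      simp_rw [this]
      rw [Finset.sum_add_distrib, Finset.sum_const, Finset.sum_ite_eq univ u fun _ => r i - r i ^2]
      simp [Fintype.card_fin]
      ring
    simp_rw [inner]
    rw [Finset.sum_const, Finset.card_univ, Fintype.card_fin, nsmul_eq_mul]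
    ring
  have htot : ∑ f : Fin n → Fin K, w f = 1 := total_mass r hsum
  have expand2 : ∀ f : Fin n → Fin K,
      w f * ((((univ.filter fun v => f v = i).card : ℕ) : ℝ) - n * r i)^2
      = w f * (∑ u, χ u f)^2 - (2 * ((n:ℝ) * r i)) * (w f * (∑ u, χ u f))
        + ((n:ℝ) * r i)^2 * w f := by
    intro f
    rw [cnt_eq_sum]
    ring
  simp_rw [show ∀ f : Fin n → Fin K, (∏ v, r (f v)) = w f from fun f => rfl, expand2]
  rw [Finset.sum_add_distrib, Finset.sum_sub_distrib, ← Finset.mul_sum, ← Finset.mul_sum,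
    hS1, hS2, htot]
  ring

lemma group_sum {α : Type*} [Fintype α] [DecidableEq α] (φ : Fin K → α) (H : (Fin n → α) → ℝ) :
    ∑ f : Fin n → Fin K, (∏ v, r (f v)) * H (φ ∘ f)
    = ∑ g : Fin n → α, (∏ v, ∑ j, (if φ j = g v then r j else 0)) * H g := by
  have key : ∀ g : Fin n → α, (∏ v, ∑ j, (if φ j = g v then r j else 0))
      = ∑ f : Fin n → Fin K, ∏ v, (if φ (f v) = g v then r (f v) else 0) := by
    intro g; rw [swap_lemma (fun v a => if φ a = g v then r a else 0)]
  simp_rw [key, sum_mul]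
  rw [Finset.sum_comm]
  refine Fintype.sum_congr _ _ fun f => ?_
  have : ∀ g : Fin n → α, (∏ v, (if φ (f v) = g v then r (f v) else 0)) * H g
      = (if g = φ ∘ f then (∏ v, r (f v)) * H (φ ∘ f) else 0) := by
    intro g
    by_cases hg : g = φ ∘ f
    · subst hg; simp [Function.comp]
    · rw [if_neg hg]
      have : ∃ v, φ (f v) ≠ g v := by
        by_contra hc; push_neg at hc
        exact hg (funext fun v => (hc v).symm)
      obtain ⟨v, hv⟩ := this
      rw [Finset.prod_eq_zero (mem_univ v) (by simp [hv]), zero_mul]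
  simp_rw [this]
  rw [Finset.sum_ite_eq' univ (φ ∘ f)]
  simp

end Swap

section Count
variable {n : ℕ}

lemma tri_cases : ∀ x : Fin 3, x = 0 ∨ x = 1 ∨ x = 2 := by decide

lemma filter_j0 (p1 p2 : Finset (Fin n)) :
    ((univ : Finset (Fin n)).filter fun v =>
      (if v ∈ p1 then (0:Fin 3) else if v ∈ p2 then 1 else 2) = 0) = p1 := by
  ext v
  simp only [Finset.mem_filter, Finset.mem_univ, true_and]
  by_cases hv : v ∈ p1
  · simp [hv]
  · simp only [hv, if_false]
    by_cases hv2 : v ∈ p2 <;> simp [hv2, hv]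

lemma filter_j1 (p1 p2 : Finset (Fin n)) (hd : ∀ v ∈ p2, v ∉ p1) :
    ((univ : Finset (Fin n)).filter fun v =>
      (if v ∈ p1 then (0:Fin 3) else if v ∈ p2 then 1 else 2) = 1) = p2 := by
  ext v
  simp only [Finset.mem_filter, Finset.mem_univ, true_and]
  by_cases hv : v ∈ p1
  · simp only [hv, if_true]
    constructor
    · intro h; exact absurd h (by decide)
    · intro h; exact absurd hv (hd v h)
  · simp only [hv, if_false]
    by_cases hv2 : v ∈ p2 <;> simp [hv2]

lemma countN (a b : ℕ) :
    (univ.filter fun g : Fin n → Fin 3 =>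
      (univ.filter fun v => g v = 0).card = a ∧ (univ.filter fun v => g v = 1).card = b).card
    = n.choose a * (n - a).choose b := by
  classical
  set T := ((univ : Finset (Finset (Fin n))).filter (fun S => S.card = a)).sigma
      (fun S : Finset (Fin n) => ((univ : Finset (Fin n)) \ S).powersetCard b) with hT
  have hcard : T.card = n.choose a * (n - a).choose b := by
    rw [hT, Finset.card_sigma]
    have h1 : ((univ : Finset (Finset (Fin n))).filter (fun S => S.card = a))
        = (univ : Finset (Fin n)).powersetCard a := by
      ext S; simp [Finset.mem_powersetCard_univ]
    have : ∀ S ∈ ((univ : Finset (Finset (Fin n))).filter (fun S => S.card = a)),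
        (((univ : Finset (Fin n)) \ S).powersetCard b).card = (n - a).choose b := by
      intro S hS
      simp only [Finset.mem_filter] at hS
      rw [Finset.card_powersetCard, Finset.card_sdiff_of_subset (Finset.subset_univ S),
        Finset.card_univ, Fintype.card_fin, hS.2]
    rw [Finset.sum_congr rfl this, Finset.sum_const, h1, Finset.card_powersetCard,
      Finset.card_univ, Fintype.card_fin, smul_eq_mul]
  rw [← hcard]
  apply Finset.card_nbij'
    (i := fun g => ⟨univ.filter fun v => g v = 0, univ.filter fun v => g v = 1⟩)
    (j := fun p v => if v ∈ p.1 then 0 else if v ∈ p.2 then 1 else 2)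
  · intro g hg
    simp only [Finset.mem_coe, Finset.mem_filter, Finset.mem_univ, true_and] at hg
    rw [Finset.mem_coe, hT, Finset.mem_sigma]
    refine ⟨by simp [hg.1], ?_⟩
    rw [Finset.mem_powersetCard]
    refine ⟨?_, hg.2⟩
    intro v hv
    simp only [Finset.mem_filter, Finset.mem_univ, true_and] at hv
    simp only [Finset.mem_sdiff, Finset.mem_univ, true_and, Finset.mem_filter]
    rw [hv]; decide
  · intro p hp
    rw [Finset.mem_coe, hT, Finset.mem_sigma, Finset.mem_powersetCard] at hp
    simp only [Finset.mem_filter, Finset.mem_univ, true_and] at hp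
    obtain ⟨h1, h2, h3⟩ := hp
    have hdisj : ∀ v ∈ p.2, v ∉ p.1 := fun v hv => (Finset.mem_sdiff.mp (h2 hv)).2
    simp only [Finset.mem_coe, Finset.mem_filter, Finset.mem_univ, true_and]
    rw [filter_j0 p.1 p.2, filter_j1 p.1 p.2 hdisj]
    exact ⟨h1, h3⟩
  · intro g hg
    funext v
    rcases tri_cases (g v) with h | h | h <;> simp [h]
  · intro p hp
    rw [Finset.mem_coe, hT, Finset.mem_sigma, Finset.mem_powersetCard] at hp
    simp only [Finset.mem_filter, Finset.mem_univ, true_and] at hp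
    obtain ⟨h1, h2, h3⟩ := hp
    have hdisj : ∀ v ∈ p.2, v ∉ p.1 := fun v hv => (Finset.mem_sdiff.mp (h2 hv)).2
    exact Sigma.ext (filter_j0 p.1 p.2) (heq_of_eq (filter_j1 p.1 p.2 hdisj))

lemma card_sum_three (g : Fin n → Fin 3) :
    ∑ c : Fin 3, (univ.filter fun v => g v = c).card = n := by
  rw [← Finset.card_eq_sum_card_fiberwise (fun v _ => Finset.mem_univ (g v)),
    Finset.card_univ, Fintype.card_fin]

lemma Tab_eq (s3 : Fin 3 → ℝ) (a b : ℕ) :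
    ∑ g : Fin n → Fin 3,
      (if (univ.filter fun v => g v = 0).card = a ∧ (univ.filter fun v => g v = 1).card = b
        then ∏ v, s3 (g v) else 0)
    = (n.choose a * (n - a).choose b : ℕ) * (s3 0 ^ a * s3 1 ^ b * s3 2 ^ (n - a - b)) := by
  rw [← Finset.sum_filter]
  have hconst : ∀ g ∈ (univ.filter fun g : Fin n → Fin 3 =>
      (univ.filter fun v => g v = 0).card = a ∧ (univ.filter fun v => g v = 1).card = b),
      ∏ v, s3 (g v) = s3 0 ^ a * s3 1 ^ b * s3 2 ^ (n - a - b) := by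
    intro g hg
    simp only [Finset.mem_filter, Finset.mem_univ, true_and] at hg
    have hfib : ∏ c : Fin 3, ∏ v ∈ univ.filter (fun v => g v = c), s3 (g v) = ∏ v, s3 (g v) :=
      Finset.prod_fiberwise_of_maps_to (fun v _ => Finset.mem_univ (g v)) _
    have hin : ∀ c : Fin 3, ∏ v ∈ univ.filter (fun v => g v = c), s3 (g v)
        = s3 c ^ (univ.filter fun v => g v = c).card := by
      intro c
      rw [Finset.prod_congr rfl (fun v hv => by
        simp only [Finset.mem_filter] at hv; rw [hv.2]), Finset.prod_const]
    rw [← hfib]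
    simp_rw [hin]
    rw [Fin.prod_univ_three]
    have hsum3 := card_sum_three g
    rw [Fin.sum_univ_three] at hsum3
    rw [hg.1, hg.2]
    congr 2
    omega
  rw [Finset.sum_congr rfl hconst, Finset.sum_const, countN a b, nsmul_eq_mul]
end Count

-- choose identity
lemma choose_identity (n t a : ℕ) (ha : a ≤ 2*t) :
    n.choose a * (n - a).choose (2*t - a) = n.choose (2*t) * (2*t).choose a := by
  by_cases h : 2*t ≤ n
  · exact (Nat.choose_mul ha).symm
  · push_neg at h
    rcases le_or_gt a n with han | han
    · have : n - a < 2*t - a := by omega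
      rw [Nat.choose_eq_zero_of_lt this, Nat.choose_eq_zero_of_lt h, mul_zero, zero_mul]
    · rw [Nat.choose_eq_zero_of_lt han, Nat.choose_eq_zero_of_lt h, zero_mul, zero_mul]

section PairAnti
variable {n : ℕ}

lemma pair_anti (s3 : Fin 3 → ℝ) (hs : ∀ c, 0 ≤ s3 c) (hsum : ∑ c, s3 c = 1)
    (τ : ℝ) (hτ : 0 ≤ τ) :
    ∑ g : Fin n → Fin 3,
      (if ((univ.filter fun v => g v = 0).card = (univ.filter fun v => g v = 1).card
          ∧ τ ≤ (((univ.filter fun v => g v = 0).card : ℕ) : ℝ))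
        then ∏ v, s3 (g v) else 0)
    ≤ (Real.sqrt (3*τ+1))⁻¹ := by
  set w : (Fin n → Fin 3) → ℝ := fun g => ∏ v, s3 (g v) with hw
  have hw0 : ∀ g, 0 ≤ w g := fun g => Finset.prod_nonneg fun v _ => hs _
  set c0 : (Fin n → Fin 3) → ℕ := fun g => (univ.filter fun v => g v = 0).card with hc0
  set c1 : (Fin n → Fin 3) → ℕ := fun g => (univ.filter fun v => g v = 1).card with hc1
  set ts : Finset ℕ := (Finset.range (n+1)).filter (fun t => τ ≤ (t:ℝ)) with hts
  set T : ℕ → ℝ := fun t => ∑ g : Fin n → Fin 3, (if c0 g = t ∧ c1 g = t then w g else 0) with hT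
  set B2 : ℕ → ℝ := fun t => ∑ g : Fin n → Fin 3, (if c0 g + c1 g = 2*t then w g else 0) with hB2
  have hc0le : ∀ g, c0 g ≤ n := fun g => by
    simpa using (Finset.card_filter_le univ (fun v => g v = 0))
  -- Step 1: LHS = ∑ t in ts, T t
  have step1 : ∑ g : Fin n → Fin 3, (if (c0 g = c1 g ∧ τ ≤ ((c0 g : ℕ) : ℝ)) then w g else 0)
      = ∑ t ∈ ts, T t := by
    simp_rw [hT]
    rw [Finset.sum_comm]
    refine Fintype.sum_congr _ _ fun g => ?_
    by_cases hE : c0 g = c1 g ∧ τ ≤ ((c0 g : ℕ) : ℝ)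
    · rw [if_pos hE]
      rw [Finset.sum_eq_single_of_mem (c0 g) ?_ ?_]
      · rw [if_pos ⟨rfl, hE.1.symm⟩]
      · rw [hts, Finset.mem_filter, Finset.mem_range]
        exact ⟨Nat.lt_succ_of_le (hc0le g), hE.2⟩
      · intro t _ ht
        rw [if_neg]; rintro ⟨h1, -⟩; exact ht h1.symm
    · rw [if_neg hE]
      refine (Finset.sum_eq_zero fun t htmem => ?_).symm
      rw [hts, Finset.mem_filter] at htmem
      rw [if_neg]
      rintro ⟨h1, h2⟩
      exact hE ⟨h1.trans h2.symm, h1 ▸ htmem.2⟩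
  -- Step 2 : B2 decomposition and bound T t ≤ (cb t / 4^t) * B2 t
  have step2 : ∀ t : ℕ, T t ≤ ((Nat.centralBinom t : ℝ) / 4^t) * B2 t := by
    intro t
    have hB2dec : B2 t = ∑ a ∈ Finset.range (2*t+1),
        ∑ g : Fin n → Fin 3, (if c0 g = a ∧ c1 g = 2*t - a then w g else 0) := by
      rw [hB2, Finset.sum_comm]
      refine Fintype.sum_congr _ _ fun g => ?_
      by_cases hE : c0 g + c1 g = 2*t
      · rw [if_pos hE]
        rw [Finset.sum_eq_single_of_mem (c0 g) (Finset.mem_range.mpr (by omega)) ?_]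
        · rw [if_pos ⟨rfl, by omega⟩]
        · intro a _ ha
          rw [if_neg]; rintro ⟨h1, -⟩; exact ha h1.symm
      · rw [if_neg hE]
        refine (Finset.sum_eq_zero fun a hamem => ?_).symm
        rw [Finset.mem_range] at hamem
        rw [if_neg]
        rintro ⟨h1, h2⟩
        exact hE (by omega)
    -- rewrite each inner sum with Tab_eq
    have hTab : ∀ a ∈ Finset.range (2*t+1),
        ∑ g : Fin n → Fin 3, (if c0 g = a ∧ c1 g = 2*t - a then w g else 0)
        = ((n.choose (2*t) * (2*t).choose a : ℕ) : ℝ)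
          * (s3 0 ^ a * s3 1 ^ (2*t - a) * s3 2 ^ (n - 2*t)) := by
      intro a hamem
      rw [Finset.mem_range] at hamem
      simp only [hc0, hc1, hw]
      rw [Tab_eq s3 a (2*t - a)]
      have h1 : n - a - (2*t - a) = n - 2*t := by omega
      have h2 : n.choose a * (n - a).choose (2*t - a) = n.choose (2*t) * (2*t).choose a :=
        choose_identity n t a (by omega)
      rw [h1, h2]
    have hTeq : T t = ((n.choose t * (n - t).choose t : ℕ) : ℝ)
        * (s3 0 ^ t * s3 1 ^ t * s3 2 ^ (n - 2*t)) := by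
      simp only [hT, hc0, hc1, hw]
      rw [Tab_eq s3 t t, show n - t - t = n - 2*t from by omega]
    rw [hTeq, hB2dec, Finset.sum_congr rfl hTab]
    have hsplit : ∀ a ∈ Finset.range (2*t+1),
        ((n.choose (2*t) * (2*t).choose a : ℕ) : ℝ) * (s3 0 ^ a * s3 1 ^ (2*t - a) * s3 2 ^ (n - 2*t))
        = (n.choose (2*t) : ℝ) * ((s3 0 ^ a * s3 1 ^ (2*t - a) * ((2*t).choose a : ℕ)) * s3 2 ^ (n - 2*t)) := by
      intro a _; push_cast; ring
    rw [Finset.sum_congr rfl hsplit, ← Finset.mul_sum, ← Finset.sum_mul,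
      ← Commute.add_pow (Commute.all (s3 0) (s3 1))]
    -- now: C(n,t)C(n-t,t) * (s0^t s1^t s2^) ≤ cb/4^t * (C(n,2t) * ((s0+s1)^{2t} * s2^))
    have hid := choose_identity n t t (by omega)
    rw [show 2*t - t = t from by omega] at hid
    rw [hid]
    have hcb : (2*t).choose t = Nat.centralBinom t := rfl
    rw [hcb]
    have key : (Nat.centralBinom t : ℝ) * (s3 0 ^ t * s3 1 ^ t)
        ≤ ((Nat.centralBinom t : ℝ) / 4^t) * (s3 0 + s3 1) ^ (2*t) := by
      have hamgm : (4:ℝ) * (s3 0 * s3 1) ≤ (s3 0 + s3 1)^2 := by nlinarith [sq_nonneg (s3 0 - s3 1)]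
      have hp : (4 * (s3 0 * s3 1))^t ≤ ((s3 0 + s3 1)^2)^t :=
        pow_le_pow_left₀ (by nlinarith [hs 0, hs 1]) hamgm t
      calc (Nat.centralBinom t : ℝ) * (s3 0 ^ t * s3 1 ^ t)
          = ((Nat.centralBinom t : ℝ) / 4^t) * (4^t * (s3 0^t * s3 1^t)) := by
            have h4 : (4:ℝ)^t ≠ 0 := by positivity
            field_simp
        _ ≤ ((Nat.centralBinom t : ℝ) / 4^t) * (s3 0 + s3 1) ^ (2*t) := by
            apply mul_le_mul_of_nonneg_left _ (by positivity)
            calc (4:ℝ)^t * (s3 0^t * s3 1^t) = (4 * (s3 0 * s3 1))^t := by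
                  rw [mul_pow, mul_pow]
              _ ≤ ((s3 0 + s3 1)^2)^t := hp
              _ = (s3 0 + s3 1)^(2*t) := (pow_mul _ 2 t).symm
      -- done
    calc ((n.choose (2*t) * Nat.centralBinom t : ℕ) : ℝ) * (s3 0 ^ t * s3 1 ^ t * s3 2 ^ (n - 2*t))
        = (n.choose (2*t) : ℝ) * ((Nat.centralBinom t : ℝ) * (s3 0 ^ t * s3 1 ^ t)) * s3 2 ^ (n - 2*t) := by
          push_cast; ring
      _ ≤ (n.choose (2*t) : ℝ) * (((Nat.centralBinom t : ℝ) / 4^t) * (s3 0 + s3 1) ^ (2*t)) * s3 2 ^ (n - 2*t) := by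
          apply mul_le_mul_of_nonneg_right _ (pow_nonneg (hs 2) _)
          exact mul_le_mul_of_nonneg_left key (by positivity)
      _ = ((Nat.centralBinom t : ℝ) / 4^t) * ((n.choose (2*t)) * ((s3 0 + s3 1) ^ (2*t) * s3 2 ^ (n - 2*t))) := by
          ring
  -- Step 3: sum of B2 over ts ≤ 1
  have step3 : ∑ t ∈ ts, B2 t ≤ 1 := by
    rw [hB2, Finset.sum_comm]
    have pointwise : ∀ g : Fin n → Fin 3, ∑ t ∈ ts, (if c0 g + c1 g = 2*t then w g else 0) ≤ w g := by
      intro g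
      rw [← Finset.sum_filter, Finset.sum_const, nsmul_eq_mul]
      have hcard : ((ts.filter fun t => c0 g + c1 g = 2*t).card : ℝ) ≤ 1 := by
        have : (ts.filter fun t => c0 g + c1 g = 2*t).card ≤ 1 := by
          apply Finset.card_le_one.mpr
          intro t1 h1 t2 h2
          rw [Finset.mem_filter] at h1 h2
          omega
        exact_mod_cast this
      calc ((ts.filter fun t => c0 g + c1 g = 2*t).card : ℝ) * w g ≤ 1 * w g :=
            mul_le_mul_of_nonneg_right hcard (hw0 g)
        _ = w g := one_mul _
    calc ∑ g : Fin n → Fin 3, ∑ t ∈ ts, (if c0 g + c1 g = 2*t then w g else 0)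
        ≤ ∑ g : Fin n → Fin 3, w g := Finset.sum_le_sum fun g _ => pointwise g
      _ = 1 := total_mass s3 hsum
  -- Step 4: combine
  have hτpos : 0 < Real.sqrt (3*τ+1) := Real.sqrt_pos.mpr (by linarith)
  have step4 : ∀ t ∈ ts, T t ≤ (Real.sqrt (3*τ+1))⁻¹ * B2 t := by
    intro t htmem
    rw [hts, Finset.mem_filter] at htmem
    have hB2nn : 0 ≤ B2 t := by
      simp only [hB2]
      exact Finset.sum_nonneg fun g _ => by split_ifs; exacts [hw0 g, le_refl 0]
    calc T t ≤ ((Nat.centralBinom t : ℝ) / 4^t) * B2 t := step2 t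
      _ ≤ (Real.sqrt (3*(t:ℝ)+1))⁻¹ * B2 t := mul_le_mul_of_nonneg_right (cb_div t) hB2nn
      _ ≤ (Real.sqrt (3*τ+1))⁻¹ * B2 t := by
          apply mul_le_mul_of_nonneg_right _ hB2nn
          apply inv_anti₀ hτpos
          apply Real.sqrt_le_sqrt
          have := htmem.2
          linarith
  calc ∑ g : Fin n → Fin 3, (if (c0 g = c1 g ∧ τ ≤ ((c0 g : ℕ) : ℝ)) then w g else 0)
      = ∑ t ∈ ts, T t := step1
    _ ≤ ∑ t ∈ ts, (Real.sqrt (3*τ+1))⁻¹ * B2 t := Finset.sum_le_sum step4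
    _ = (Real.sqrt (3*τ+1))⁻¹ * ∑ t ∈ ts, B2 t := by rw [Finset.mul_sum]
    _ ≤ (Real.sqrt (3*τ+1))⁻¹ * 1 := by
        apply mul_le_mul_of_nonneg_left step3 (by positivity)
    _ = (Real.sqrt (3*τ+1))⁻¹ := mul_one _
end PairAnti

section Helpers2
open Finset
variable {n K : ℕ} {r : Fin K → ℝ}

/-- indicator monotone bound -/
lemma sum_ite_mono (w : (Fin n → Fin K) → ℝ) (hw : ∀ f, 0 ≤ w f)
    (E F : (Fin n → Fin K) → Prop) [∀ f, Decidable (E f)] [∀ f, Decidable (F f)]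
    (h : ∀ f, E f → F f) :
    ∑ f : Fin n → Fin K, (if E f then w f else (0:ℝ)) ≤ ∑ f : Fin n → Fin K, (if F f then w f else 0) := by
  refine Finset.sum_le_sum fun f _ => ?_
  by_cases hE : E f
  · rw [if_pos hE, if_pos (h f hE)]
  · rw [if_neg hE]
    split_ifs
    exacts [hw f, le_refl 0]

lemma ite_union_le {ι : Type*} (s : Finset ι) (Q : ι → Prop) (w : ℝ) (hw : 0 ≤ w)
    (E : Prop) [Decidable E] [∀ p, Decidable (Q p)] (hE : E → ∃ p ∈ s, Q p) :
    (if E then w else (0:ℝ)) ≤ ∑ p ∈ s, (if Q p then w else 0) := by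
  by_cases h : E
  · rw [if_pos h]
    obtain ⟨p, hp, hQ⟩ := hE h
    calc w = (if Q p then w else 0) := by rw [if_pos hQ]
      _ ≤ ∑ p ∈ s, (if Q p then w else 0) := by
        refine Finset.single_le_sum (f := fun q => if Q q then w else (0:ℝ)) (fun q _ => ?_) hp
        split_ifs; exacts [hw, le_refl 0]
  · rw [if_neg h]
    refine Finset.sum_nonneg fun q _ => ?_
    split_ifs; exacts [hw, le_refl 0]

/-- Chebyshev-type bound. -/
lemma cheb_prob (r : Fin K → ℝ) (hsum : ∑ j, r j = 1) (hr0 : ∀ j, 0 ≤ r j) (i : Fin K)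
    (lam : ℝ) (hlam : 0 < lam) :
    ∑ f : Fin n → Fin K,
      (if lam ≤ |(((univ.filter fun v => f v = i).card : ℕ) : ℝ) - n * r i| then ∏ v, r (f v) else 0)
    ≤ n * r i * (1 - r i) / lam^2 := by
  rw [le_div_iff₀ (by positivity)]
  calc (∑ f : Fin n → Fin K,
        (if lam ≤ |(((univ.filter fun v => f v = i).card : ℕ) : ℝ) - n * r i| then ∏ v, r (f v) else 0)) * lam^2
      = ∑ f : Fin n → Fin K,
        (if lam ≤ |(((univ.filter fun v => f v = i).card : ℕ) : ℝ) - n * r i| then ∏ v, r (f v) else 0) * lam^2 := by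
        rw [Finset.sum_mul]
    _ ≤ ∑ f : Fin n → Fin K, (∏ v, r (f v)) *
          ((((univ.filter fun v => f v = i).card : ℕ) : ℝ) - n * r i)^2 := by
        refine Finset.sum_le_sum fun f _ => ?_
        have hwf : 0 ≤ ∏ v, r (f v) := Finset.prod_nonneg fun v _ => hr0 _
        by_cases h : lam ≤ |(((univ.filter fun v => f v = i).card : ℕ) : ℝ) - n * r i|
        · rw [if_pos h]
          have h2 : lam^2 ≤ ((((univ.filter fun v => f v = i).card : ℕ) : ℝ) - n * r i)^2 := by
            calc lam^2 ≤ |(((univ.filter fun v => f v = i).card : ℕ) : ℝ) - n * r i|^2 :=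
                  pow_le_pow_left₀ hlam.le h 2
              _ = _ := sq_abs _
          exact mul_le_mul_of_nonneg_left h2 hwf
        · rw [if_neg h, zero_mul]
          exact mul_nonneg hwf (sq_nonneg _)
    _ = n * r i * (1 - r i) := cheb_core r hsum i

end Helpers2

section MainBound
open Finset
variable {n K : ℕ}

lemma upper_bound (r : Fin K → ℝ) (hsum : ∑ i, r i = 1) (hr0 : ∀ j, 0 ≤ r j)
    (E : (Fin n → Fin K) → Prop) [∀ f, Decidable (E f)] :
    ∑ f : Fin n → Fin K, (if E f then ∏ v, r (f v) else 0) ≤ 1 := by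
  calc ∑ f : Fin n → Fin K, (if E f then ∏ v, r (f v) else 0)
      ≤ ∑ f : Fin n → Fin K, ∏ v, r (f v) := by
        refine Finset.sum_le_sum fun f _ => ?_
        have hw : 0 ≤ ∏ v, r (f v) := Finset.prod_nonneg fun v _ => hr0 _
        split_ifs
        exacts [le_refl _, hw]
    _ = 1 := total_mass r hsum

lemma lower_bound (hn : 1 ≤ n) (hK : 0 < K) (r : Fin K → ℝ)
    (hsum : ∑ i, r i = 1) (c₁ c₂ : ℝ) (hc₁ : 0 < c₁) (hc₂ : 0 < c₂)
    (hrb : ∀ i, c₁ / K ≤ r i ∧ r i ≤ c₂ / K) :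
    1 - ((4*c₂/c₁^2) * ((K:ℝ)^2/(n:ℝ)) + (K:ℝ)^2 * (Real.sqrt (3*(c₁/2*(n:ℝ)/(K:ℝ))+1))⁻¹)
    ≤ ∑ f : Fin n → Fin K,
        (if ((∀ i : Fin K, c₁/2 * (n:ℝ) / (K:ℝ) ≤ ((univ.filter fun v => f v = i).card : ℝ) ∧
                ((univ.filter fun v => f v = i).card : ℝ) ≤ 2*c₂ * (n:ℝ) / (K:ℝ)) ∧
              ∀ i j : Fin K, i ≠ j →
                (univ.filter fun v => f v = i).card ≠ (univ.filter fun v => f v = j).card)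
          then ∏ v, r (f v) else 0) := by
  have hN : (0:ℝ) < n := by exact_mod_cast hn
  have hKr : (0:ℝ) < K := by exact_mod_cast hK
  have hr0 : ∀ j, 0 ≤ r j := fun j => le_trans (by positivity) (hrb j).1
  have hr1 : ∀ j, r j ≤ 1 := fun j =>
    hsum ▸ Finset.single_le_sum (fun a _ => hr0 a) (mem_univ j)
  have hc12 : c₁ ≤ c₂ := by
    have i0 : Fin K := ⟨0, hK⟩
    have h1 := ((hrb i0).1).trans ((hrb i0).2)
    rw [div_le_div_iff_of_pos_right hKr] at h1
    exact h1
  set w : (Fin n → Fin K) → ℝ := fun f => ∏ v, r (f v) with hw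
  have hw0 : ∀ f, 0 ≤ w f := fun f => Finset.prod_nonneg fun v _ => hr0 _
  set cnt : Fin K → (Fin n → Fin K) → ℕ := fun i f => (univ.filter fun v => f v = i).card with hcnt
  set Good : (Fin n → Fin K) → Prop := fun f =>
    ((∀ i : Fin K, c₁/2 * (n:ℝ) / (K:ℝ) ≤ (cnt i f : ℝ) ∧ (cnt i f : ℝ) ≤ 2*c₂ * (n:ℝ) / (K:ℝ)) ∧
      ∀ i j : Fin K, i ≠ j → cnt i f ≠ cnt j f) with hGood
  set BadA : Fin K → (Fin n → Fin K) → Prop := fun i f =>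
    ¬(c₁/2 * (n:ℝ) / (K:ℝ) ≤ (cnt i f : ℝ) ∧ (cnt i f : ℝ) ≤ 2*c₂ * (n:ℝ) / (K:ℝ)) with hBadA
  set BadP : Fin K × Fin K → (Fin n → Fin K) → Prop := fun p f =>
    cnt p.1 f = cnt p.2 f ∧ c₁/2 * (n:ℝ) / (K:ℝ) ≤ (cnt p.1 f : ℝ) with hBadP
  have split : ∀ f, ¬ Good f → (∃ i, BadA i f) ∨ (∃ p ∈ (univ : Finset (Fin K)).offDiag, BadP p f) := by
    intro f hf
    by_cases hA : ∀ i : Fin K, c₁/2 * (n:ℝ) / (K:ℝ) ≤ (cnt i f : ℝ) ∧ (cnt i f : ℝ) ≤ 2*c₂ * (n:ℝ) / (K:ℝ)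
    · right
      have hB : ¬ ∀ i j : Fin K, i ≠ j → cnt i f ≠ cnt j f := fun hB => hf ⟨hA, hB⟩
      push_neg at hB
      obtain ⟨i, j, hij, heq⟩ := hB
      exact ⟨(i, j), Finset.mem_offDiag.mpr ⟨mem_univ _, mem_univ _, hij⟩, heq, (hA i).1⟩
    · left
      push_neg at hA
      obtain ⟨i, hi⟩ := hA
      refine ⟨i, ?_⟩
      rw [hBadA]
      push_neg
      exact hi
  -- complement identity
  have complement : ∑ f : Fin n → Fin K, (if Good f then w f else 0)
      = 1 - ∑ f : Fin n → Fin K, (if ¬ Good f then w f else 0) := by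
    have hpt : ∀ f : Fin n → Fin K, (if Good f then w f else 0) + (if ¬ Good f then w f else 0) = w f := by
      intro f
      by_cases h : Good f
      · rw [if_pos h, if_neg (not_not_intro h), add_zero]
      · rw [if_neg h, if_pos h, zero_add]
    have := Finset.sum_congr rfl (fun f (_ : f ∈ (univ : Finset (Fin n → Fin K))) => hpt f)
    rw [Finset.sum_add_distrib] at this
    rw [total_mass r hsum] at this
    linarith
  -- union bound
  have union : ∑ f : Fin n → Fin K, (if ¬ Good f then w f else 0)
      ≤ (∑ i : Fin K, ∑ f : Fin n → Fin K, (if BadA i f then w f else 0))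
        + ∑ p ∈ (univ : Finset (Fin K)).offDiag, ∑ f : Fin n → Fin K, (if BadP p f then w f else 0) := by
    have hpt : ∀ f : Fin n → Fin K, (if ¬ Good f then w f else 0)
        ≤ (∑ i : Fin K, if BadA i f then w f else 0)
          + ∑ p ∈ (univ : Finset (Fin K)).offDiag, (if BadP p f then w f else 0) := by
      intro f
      have nn1 : (0:ℝ) ≤ ∑ i : Fin K, if BadA i f then w f else 0 :=
        Finset.sum_nonneg fun i _ => by split_ifs; exacts [hw0 f, le_refl 0]
      have nn2 : (0:ℝ) ≤ ∑ p ∈ (univ : Finset (Fin K)).offDiag, (if BadP p f then w f else 0) :=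
        Finset.sum_nonneg fun p _ => by split_ifs; exacts [hw0 f, le_refl 0]
      by_cases h : ¬ Good f
      · rcases split f h with ⟨i, hi⟩ | ⟨p, hp, hP⟩
        · calc (if ¬ Good f then w f else 0) ≤ ∑ i : Fin K, if BadA i f then w f else 0 :=
                ite_union_le univ (fun i => BadA i f) (w f) (hw0 f) _ (fun _ => ⟨i, mem_univ i, hi⟩)
            _ ≤ _ := le_add_of_nonneg_right nn2
        · calc (if ¬ Good f then w f else 0)
              ≤ ∑ p ∈ (univ : Finset (Fin K)).offDiag, (if BadP p f then w f else 0) :=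
                ite_union_le _ (fun p => BadP p f) (w f) (hw0 f) _ (fun _ => ⟨p, hp, hP⟩)
            _ ≤ _ := le_add_of_nonneg_left nn1
      · rw [if_neg h]
        exact add_nonneg nn1 nn2
    calc ∑ f : Fin n → Fin K, (if ¬ Good f then w f else 0)
        ≤ ∑ f : Fin n → Fin K, ((∑ i : Fin K, if BadA i f then w f else 0)
          + ∑ p ∈ (univ : Finset (Fin K)).offDiag, (if BadP p f then w f else 0)) :=
          Finset.sum_le_sum fun f _ => hpt f
      _ = _ := by
          rw [Finset.sum_add_distrib]
          congr 1
          · exact Finset.sum_comm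
          · exact Finset.sum_comm
  -- Chebyshev per-label bound
  have chebA : ∀ i : Fin K, ∑ f : Fin n → Fin K, (if BadA i f then w f else 0)
      ≤ 4*c₂/c₁^2 * ((K:ℝ)/(n:ℝ)) := by
    intro i
    set lam : ℝ := c₁/2*(n:ℝ)/(K:ℝ) with hlam_def
    have hlam : 0 < lam := by positivity
    have himp : ∀ f, BadA i f → lam ≤ |((cnt i f : ℕ) : ℝ) - n * r i| := by
      intro f hB
      have hlow : c₁ * (n:ℝ)/K ≤ n * r i := by
        have h := mul_le_mul_of_nonneg_left (hrb i).1 hN.le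
        calc c₁ * (n:ℝ)/K = (n:ℝ) * (c₁/K) := by ring
          _ ≤ (n:ℝ) * r i := h
      have hhigh : (n:ℝ) * r i ≤ c₂*(n:ℝ)/K := by
        have h := mul_le_mul_of_nonneg_left (hrb i).2 hN.le
        calc (n:ℝ) * r i ≤ (n:ℝ) * (c₂/K) := h
          _ = c₂*(n:ℝ)/K := by ring
      have h2lam : c₁ * (n:ℝ)/(K:ℝ) = 2 * lam := by rw [hlam_def]; ring
      rw [hBadA] at hB
      rcases not_and_or.mp hB with h | h
      · push_neg at h
        have h2 : lam ≤ (n * r i) - ((cnt i f : ℕ) : ℝ) := by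
          linarith [h2lam]
        calc lam ≤ (n * r i) - ((cnt i f : ℕ) : ℝ) := h2
          _ ≤ |((cnt i f : ℕ) : ℝ) - n * r i| := by
              rw [abs_sub_comm]
              exact le_abs_self _
      · push_neg at h
        have haux : lam ≤ c₂*(n:ℝ)/K := by
          have h1 : c₁/2 * ((n:ℝ)/K) ≤ c₂ * ((n:ℝ)/K) :=
            mul_le_mul_of_nonneg_right (by linarith [hc12, hc₁]) (by positivity)
          calc lam = c₁/2*((n:ℝ)/K) := by rw [hlam_def]; ring
            _ ≤ c₂*((n:ℝ)/K) := h1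
            _ = c₂*(n:ℝ)/K := by ring
        have h22 : 2*c₂*(n:ℝ)/(K:ℝ) = 2*(c₂*(n:ℝ)/(K:ℝ)) := by ring
        have h2 : lam ≤ ((cnt i f : ℕ) : ℝ) - n * r i := by linarith [h22]
        exact h2.trans (le_abs_self _)
    calc ∑ f : Fin n → Fin K, (if BadA i f then w f else 0)
        ≤ ∑ f : Fin n → Fin K, (if lam ≤ |((cnt i f : ℕ) : ℝ) - n * r i| then w f else 0) :=
          sum_ite_mono w hw0 _ _ himp
      _ ≤ n * r i * (1 - r i) / lam^2 := cheb_prob r hsum hr0 i lam hlam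
      _ ≤ 4*c₂/c₁^2 * ((K:ℝ)/(n:ℝ)) := by
          have h1 : (n:ℝ) * r i * (1 - r i) ≤ c₂*(n:ℝ)/K := by
            have hle : (n:ℝ) * r i ≤ (n:ℝ) * (c₂/K) := mul_le_mul_of_nonneg_left (hrb i).2 hN.le
            have he : (n:ℝ)*(c₂/(K:ℝ)) = c₂*(n:ℝ)/(K:ℝ) := by ring
            nlinarith [mul_nonneg (mul_nonneg hN.le (hr0 i)) (hr0 i)]
          have h2 : (n:ℝ) * r i * (1 - r i)/lam^2 ≤ (c₂*(n:ℝ)/K)/lam^2 := by gcongr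
          have h3 : (c₂*(n:ℝ)/K)/lam^2 = 4*c₂/c₁^2 * ((K:ℝ)/(n:ℝ)) := by
            rw [hlam_def]
            field_simp
            ring
          linarith
  -- anti-concentration per-pair bound
  have antiP : ∀ p ∈ (univ : Finset (Fin K)).offDiag,
      ∑ f : Fin n → Fin K, (if BadP p f then w f else 0)
      ≤ (Real.sqrt (3*(c₁/2*(n:ℝ)/(K:ℝ))+1))⁻¹ := by
    intro p hp
    have hij : p.1 ≠ p.2 := (Finset.mem_offDiag.mp hp).2.2
    set φ : Fin K → Fin 3 := fun a => if a = p.1 then 0 else if a = p.2 then 1 else 2 with hφ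
    have hφ0 : ∀ a, φ a = 0 ↔ a = p.1 := by
      intro a
      constructor
      · intro h
        by_contra hne
        rw [hφ] at h
        simp only [if_neg hne] at h
        split_ifs at h
        · exact absurd h (by decide)
        · exact absurd h (by decide)
      · intro h
        rw [hφ]
        simp [h]
    have hφ1 : ∀ a, φ a = 1 ↔ a = p.2 := by
      intro a
      constructor
      · intro h
        rw [hφ] at h
        dsimp only at h
        split_ifs at h with h1 h2
        · exact absurd h (by decide)
        · exact h2
        · exact absurd h (by decide)
      · intro h
        rw [hφ]
        dsimp only
        rw [if_neg (fun hc => hij (hc.symm.trans h)), if_pos h]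
    have hcnt0 : ∀ f : Fin n → Fin K, cnt p.1 f = (univ.filter fun v => (φ ∘ f) v = 0).card := by
      intro f
      rw [hcnt]
      dsimp only
      congr 1
      ext v
      simp only [Finset.mem_filter, Finset.mem_univ, true_and, Function.comp_apply]
      exact (hφ0 (f v)).symm
    have hcnt1 : ∀ f : Fin n → Fin K, cnt p.2 f = (univ.filter fun v => (φ ∘ f) v = 1).card := by
      intro f
      rw [hcnt]
      dsimp only
      congr 1
      ext v
      simp only [Finset.mem_filter, Finset.mem_univ, true_and, Function.comp_apply]
      exact (hφ1 (f v)).symm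
    set H : (Fin n → Fin 3) → ℝ := fun g =>
      if ((univ.filter fun v => g v = 0).card = (univ.filter fun v => g v = 1).card
          ∧ c₁/2*(n:ℝ)/(K:ℝ) ≤ (((univ.filter fun v => g v = 0).card : ℕ) : ℝ)) then (1:ℝ) else 0
      with hH
    have key : ∀ f : Fin n → Fin K, (if BadP p f then w f else 0) = w f * H (φ ∘ f) := by
      intro f
      have hiff : BadP p f ↔ ((univ.filter fun v => (φ ∘ f) v = 0).card
          = (univ.filter fun v => (φ ∘ f) v = 1).card
          ∧ c₁/2*(n:ℝ)/(K:ℝ) ≤ (((univ.filter fun v => (φ ∘ f) v = 0).card : ℕ) : ℝ)) := by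
        rw [hBadP]
        dsimp only
        rw [hcnt0 f, hcnt1 f]
      rw [hH]
      dsimp only
      by_cases h : BadP p f
      · rw [if_pos h, if_pos (hiff.mp h), mul_one]
      · rw [if_neg h, if_neg (fun hc => h (hiff.mpr hc)), mul_zero]
    set s3 : Fin 3 → ℝ := fun cc => ∑ j, if φ j = cc then r j else 0 with hs3def
    have hs3 : ∀ cc, 0 ≤ s3 cc := fun cc => Finset.sum_nonneg fun j _ => by
      split_ifs
      exacts [hr0 j, le_refl 0]
    have hsum3 : ∑ cc, s3 cc = 1 := by
      rw [hs3def]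
      rw [Finset.sum_comm]
      calc ∑ j : Fin K, ∑ cc : Fin 3, (if φ j = cc then r j else 0)
          = ∑ j : Fin K, r j := by
            refine Finset.sum_congr rfl fun j _ => ?_
            rw [Finset.sum_ite_eq univ (φ j) (fun _ => r j)]
            simp
        _ = 1 := hsum
    calc ∑ f : Fin n → Fin K, (if BadP p f then w f else 0)
        = ∑ f : Fin n → Fin K, w f * H (φ ∘ f) := Finset.sum_congr rfl fun f _ => key f
      _ = ∑ g : Fin n → Fin 3, (∏ v, s3 (g v)) * H g := by
          simp only [hw, hs3def]
          exact group_sum r φ H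
      _ = ∑ g : Fin n → Fin 3,
          (if ((univ.filter fun v => g v = 0).card = (univ.filter fun v => g v = 1).card
            ∧ c₁/2*(n:ℝ)/(K:ℝ) ≤ (((univ.filter fun v => g v = 0).card : ℕ) : ℝ))
            then ∏ v, s3 (g v) else 0) := by
          refine Finset.sum_congr rfl fun g _ => ?_
          rw [hH]
          dsimp only
          split_ifs
          · rw [mul_one]
          · rw [mul_zero]
      _ ≤ (Real.sqrt (3*(c₁/2*(n:ℝ)/(K:ℝ))+1))⁻¹ := pair_anti s3 hs3 hsum3 _ (by positivity)
  have sumA : ∑ i : Fin K, ∑ f : Fin n → Fin K, (if BadA i f then w f else 0)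
      ≤ (4*c₂/c₁^2) * ((K:ℝ)^2/(n:ℝ)) := by
    calc ∑ i : Fin K, ∑ f : Fin n → Fin K, (if BadA i f then w f else 0)
        ≤ ∑ i : Fin K, 4*c₂/c₁^2 * ((K:ℝ)/(n:ℝ)) := Finset.sum_le_sum fun i _ => chebA i
      _ = K * (4*c₂/c₁^2 * ((K:ℝ)/(n:ℝ))) := by
          rw [Finset.sum_const, Finset.card_univ, Fintype.card_fin, nsmul_eq_mul]
      _ = (4*c₂/c₁^2) * ((K:ℝ)^2/(n:ℝ)) := by ring
  have sumP : ∑ p ∈ (univ : Finset (Fin K)).offDiag, ∑ f : Fin n → Fin K, (if BadP p f then w f else 0)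
      ≤ (K:ℝ)^2 * (Real.sqrt (3*(c₁/2*(n:ℝ)/(K:ℝ))+1))⁻¹ := by
    have hpos : (0:ℝ) ≤ (Real.sqrt (3*(c₁/2*(n:ℝ)/(K:ℝ))+1))⁻¹ := by positivity
    calc ∑ p ∈ (univ : Finset (Fin K)).offDiag, ∑ f : Fin n → Fin K, (if BadP p f then w f else 0)
        ≤ ∑ p ∈ (univ : Finset (Fin K)).offDiag, (Real.sqrt (3*(c₁/2*(n:ℝ)/(K:ℝ))+1))⁻¹ :=
          Finset.sum_le_sum antiP
      _ = ((univ : Finset (Fin K)).offDiag.card : ℝ) * (Real.sqrt (3*(c₁/2*(n:ℝ)/(K:ℝ))+1))⁻¹ := by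
          rw [Finset.sum_const, nsmul_eq_mul]
      _ ≤ (K:ℝ)^2 * (Real.sqrt (3*(c₁/2*(n:ℝ)/(K:ℝ))+1))⁻¹ := by
          apply mul_le_mul_of_nonneg_right _ hpos
          have : ((univ : Finset (Fin K)).offDiag.card : ℝ) ≤ ((K*K : ℕ) : ℝ) := by
            have hcard : (univ : Finset (Fin K)).offDiag.card = K * K - K := by
              rw [Finset.offDiag_card, Finset.card_univ, Fintype.card_fin]
            rw [hcard]
            exact_mod_cast Nat.sub_le _ _
          calc ((univ : Finset (Fin K)).offDiag.card : ℝ) ≤ ((K*K : ℕ) : ℝ) := this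
            _ = (K:ℝ)^2 := by push_cast; ring
  -- combine
  have : ∑ f : Fin n → Fin K, (if Good f then w f else 0)
      ≥ 1 - ((4*c₂/c₁^2) * ((K:ℝ)^2/(n:ℝ)) + (K:ℝ)^2 * (Real.sqrt (3*(c₁/2*(n:ℝ)/(K:ℝ))+1))⁻¹) := by
    rw [complement]
    have := union.trans (add_le_add sumA sumP)
    linarith
  exact this
end MainBound

end AuxLemmas

open scoped Classical in
/-- If `n` vertices independently receive one of `k` community labels, label `i` with
probability `rᵢ`, `∑ rᵢ = 1`, each `rᵢ = Θ(1/k)`, and `k = o(n^{1/5})`, then with probability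
tending to `1` as `n → ∞`, every community size is `Θ(n/k)` and all `k` community sizes are
pairwise distinct. -/
theorem balanced_and_distinct_community_sizes
    (k : ℕ → ℕ) (hk : ∀ n, 0 < k n)
    (r : (n : ℕ) → Fin (k n) → ℝ)
    (hr_sum : ∀ n, ∑ i, r n i = 1)
    (hr_theta : ∃ c₁ c₂ : ℝ, 0 < c₁ ∧ 0 < c₂ ∧
      ∀ n, ∀ i : Fin (k n), c₁ / (k n : ℝ) ≤ r n i ∧ r n i ≤ c₂ / (k n : ℝ))
    (hk_small : Tendsto (fun n => (k n : ℝ) / (n : ℝ) ^ ((1 : ℝ) / 5)) atTop (nhds 0)) :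
    ∃ c C : ℝ, 0 < c ∧ 0 < C ∧
      Tendsto
        (fun n =>
          ∑ f : Fin n → Fin (k n),
            (if ((∀ i : Fin (k n),
                    c * (n : ℝ) / (k n : ℝ) ≤ ((univ.filter fun v => f v = i).card : ℝ) ∧
                    ((univ.filter fun v => f v = i).card : ℝ) ≤ C * (n : ℝ) / (k n : ℝ)) ∧
                  ∀ i j : Fin (k n), i ≠ j →
                    (univ.filter fun v => f v = i).card ≠ (univ.filter fun v => f v = j).card)
              then ∏ v : Fin n, r n (f v) else 0))
        atTop (nhds 1) := by

  obtain ⟨c₁, c₂, hc₁, hc₂, hrb⟩ := hr_theta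
  refine ⟨c₁/2, 2*c₂, by positivity, by positivity, ?_⟩
  set b : ℕ → ℝ := fun n => (4*c₂/c₁^2) * ((k n:ℝ)^2/(n:ℝ))
      + (k n:ℝ)^2 * (Real.sqrt (3*(c₁/2*(n:ℝ)/(k n:ℝ))+1))⁻¹ with hb
  have hbounds : ∀ᶠ n : ℕ in atTop, 1 ≤ n := eventually_ge_atTop 1
  have hu : Tendsto (fun n : ℕ => (k n:ℝ)^5/(n:ℝ)) atTop (nhds 0) := by
    have h5 : Tendsto (fun n : ℕ => ((k n:ℝ)/(n:ℝ)^((1:ℝ)/5))^5) atTop (nhds 0) := by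
      have := hk_small.pow 5
      simpa using this
    refine h5.congr' ?_
    filter_upwards [hbounds] with n hn
    have hN : (0:ℝ) < n := by exact_mod_cast hn
    rw [div_pow]
    congr 1
    rw [← Real.rpow_natCast ((n:ℝ)^((1:ℝ)/5)) 5, ← Real.rpow_mul hN.le]
    norm_num
  have ht1 : Tendsto (fun n : ℕ => (4*c₂/c₁^2) * ((k n:ℝ)^2/(n:ℝ))) atTop (nhds 0) := by
    have sq : Tendsto (fun n : ℕ => (k n:ℝ)^2/(n:ℝ)) atTop (nhds 0) := by
      apply tendsto_of_tendsto_of_tendsto_of_le_of_le' tendsto_const_nhds hu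
      · filter_upwards [hbounds] with n hn
        positivity
      · filter_upwards [hbounds] with n hn
        have hK1 : (1:ℝ) ≤ (k n : ℝ) := by exact_mod_cast hk n
        have hN : (0:ℝ) < n := by exact_mod_cast hn
        gcongr
        · norm_num
    simpa using sq.const_mul (4*c₂/c₁^2)
  have ht2 : Tendsto (fun n : ℕ => (k n:ℝ)^2 * (Real.sqrt (3*(c₁/2*(n:ℝ)/(k n:ℝ))+1))⁻¹)
      atTop (nhds 0) := by
    have hup : Tendsto (fun n : ℕ => Real.sqrt ((k n:ℝ)^5/(n:ℝ) * (2/(3*c₁)))) atTop (nhds 0) := by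
      have h := (hu.mul_const (2/(3*c₁))).sqrt
      simpa using h
    apply tendsto_of_tendsto_of_tendsto_of_le_of_le' tendsto_const_nhds hup
    · filter_upwards [hbounds] with n hn
      positivity
    · filter_upwards [hbounds] with n hn
      have hK : (0:ℝ) < k n := by exact_mod_cast hk n
      have hN : (0:ℝ) < n := by exact_mod_cast hn
      set y : ℝ := 3*c₁/2*(n:ℝ)/(k n:ℝ) with hy_def
      have hy : 0 < y := by rw [hy_def]; positivity
      have hxy : y ≤ 3*(c₁/2*(n:ℝ)/(k n:ℝ))+1 := by
        have : y = 3*(c₁/2*(n:ℝ)/(k n:ℝ)) := by rw [hy_def]; ring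
        linarith [this]
      have h1 : (Real.sqrt (3*(c₁/2*(n:ℝ)/(k n:ℝ))+1))⁻¹ ≤ (Real.sqrt y)⁻¹ := by
        apply inv_anti₀ (Real.sqrt_pos.mpr hy)
        exact Real.sqrt_le_sqrt hxy
      calc (k n:ℝ)^2 * (Real.sqrt (3*(c₁/2*(n:ℝ)/(k n:ℝ))+1))⁻¹
          ≤ (k n:ℝ)^2 * (Real.sqrt y)⁻¹ := by
            apply mul_le_mul_of_nonneg_left h1 (by positivity)
        _ = Real.sqrt ((k n:ℝ)^4) * Real.sqrt y⁻¹ := by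
            rw [show ((k n:ℝ)^4) = ((k n:ℝ)^2)^2 by ring, Real.sqrt_sq (by positivity),
              Real.sqrt_inv]
        _ = Real.sqrt ((k n:ℝ)^4 * y⁻¹) := (Real.sqrt_mul (by positivity) _).symm
        _ = Real.sqrt ((k n:ℝ)^5/(n:ℝ) * (2/(3*c₁))) := by
            congr 1
            rw [hy_def]
            field_simp
  have hb0 : Tendsto b atTop (nhds 0) := by
    have := ht1.add ht2
    simpa [hb] using this
  apply tendsto_of_tendsto_of_tendsto_of_le_of_le' (g := fun n => 1 - b n) (h := fun _ => (1:ℝ))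
  · simpa using tendsto_const_nhds.sub hb0
  · exact tendsto_const_nhds
  · filter_upwards [hbounds] with n hn
    exact lower_bound hn (hk n) (r n) (hr_sum n) c₁ c₂ hc₁ hc₂ (hrb n)
  · filter_upwards with n
    exact upper_bound (r n) (hr_sum n)
      (fun j => le_trans (by positivity) ((hrb n j).1)) _
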